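/- Let A be a finite-dimensional commutative normed ℂ-algebra with identity whose norm is submultiplicative, let N ≥ 1, and let c : (Fin N → ℕ) → A be a family of coefficients. Suppose there is r > 0 such that for every Z : Fin N → A with ‖Z i‖ < r for all i, the family α ↦ c α * ∏ i, (Z i)^(α i) is summable and its sum equals 0. Then c α = 0 for every multi-index α. -/

import Mathlib

open scoped NNReal ENNReal

section aux

variable {E : Type*} [NormedAddCommGroup E] [NormedSpace ℂ E] [FiniteDimensional ℂ E]

/-- One-variable identity theorem. -/
lemma onevar_aux (a : ℕ → E) (r : ℝ) (hr : 0 < r)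
    (h : ∀ z : ℂ, ‖z‖ < r → Summable (fun n => z ^ n • a n) ∧ (∑' n, z ^ n • a n) = 0) :
    ∀ n, a n = 0 := by
  haveI : FiniteDimensional ℝ E := FiniteDimensional.trans ℝ ℂ E
  set p : FormalMultilinearSeries ℂ ℂ E :=
    fun n => ContinuousMultilinearMap.mkPiRing ℂ (Fin n) (a n) with hp
  have papp : ∀ n (z : ℂ), (p n fun _ => z) = z ^ n • a n := by
    intro n z
    simp [hp, ContinuousMultilinearMap.mkPiRing_apply]
  have hz2 : ‖((r / 2 : ℝ) : ℂ)‖ < r := by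
    rw [Complex.norm_real, Real.norm_eq_abs, abs_of_pos (by linarith)]; linarith
  have hrad : ENNReal.ofReal (r / 2) ≤ p.radius := by
    apply FormalMultilinearSeries.le_radius_of_summable
    have hs := ((h _ hz2).1).norm
    apply hs.congr
    intro n
    simp only [norm_smul, norm_pow, Complex.norm_real, Real.norm_eq_abs,
      abs_of_pos (by linarith : (0:ℝ) < r / 2)]
    rw [mul_comm]
    congr 1
    · simp [hp, ContinuousMultilinearMap.norm_mkPiRing]
    · rw [Real.coe_toNNReal _ (by linarith)]
  have hball : HasFPowerSeriesOnBall (0 : ℂ → E) p 0 (ENNReal.ofReal (r / 2)) := by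
    refine ⟨hrad, by simp [ENNReal.ofReal_pos]; linarith, ?_⟩
    intro y hy
    have hy' : ‖y‖ < r := by
      rw [EMetric.mem_ball, edist_zero_right, ← ofReal_norm] at hy
      have := (ENNReal.ofReal_lt_ofReal_iff (by linarith)).mp hy
      linarith
    have h1 := (h y hy').1
    have h2 := (h y hy').2
    have : HasSum (fun n => y ^ n • a n) 0 := h2 ▸ h1.hasSum
    simpa [papp] using this
  have hzero : p = 0 := hball.hasFPowerSeriesAt.eq_zero
  intro n
  have := papp n 1
  rw [hzero] at this
  simpa using this.symm

/-- Multivariable identity theorem, by induction on the number of variables. -/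
lemma multivar_aux : ∀ (N : ℕ) (a : (Fin N → ℕ) → E) (r : ℝ), 0 < r →
    (∀ z : Fin N → ℂ, (∀ i, ‖z i‖ < r) →
      Summable (fun α : Fin N → ℕ => (∏ i, z i ^ α i) • a α) ∧
      (∑' α : Fin N → ℕ, (∏ i, z i ^ α i) • a α) = 0) →
    ∀ α, a α = 0 := by
  intro N
  induction N with
  | zero =>
    intro a r hr h α
    have h0 := (h (fun i => i.elim0) (fun i => i.elim0)).2
    rw [tsum_eq_single α (fun b hb => absurd (Subsingleton.elim b α) hb)] at h0
    simpa using h0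
  | succ N IH =>
    intro a r hr h
    have key : ∀ (z0 : ℂ), ‖z0‖ < r → ∀ (w : Fin N → ℂ), (∀ i, ‖w i‖ < r) →
        Summable (fun q : ℕ × (Fin N → ℕ) =>
          z0 ^ q.1 • ((∏ i, w i ^ q.2 i) • a (Fin.cons q.1 q.2))) := by
      intro z0 hz0 w hw
      have hz : ∀ i, ‖(Fin.cons z0 w : Fin (N + 1) → ℂ) i‖ < r := by
        intro i
        rcases Fin.eq_zero_or_eq_succ i with rfl | ⟨j, rfl⟩
        · simpa using hz0
        · simpa using hw j
      have hs := (h ((Fin.cons z0 w : Fin (N + 1) → ℂ)) hz).1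
      have := (Fin.consEquiv (fun _ : Fin (N + 1) => ℕ)).summable_iff.mpr hs
      apply this.congr
      intro q
      simp [Fin.consEquiv, Fin.prod_univ_succ, mul_smul]
    -- slice summability with nonzero z0
    have hz2 : ‖((r / 2 : ℝ) : ℂ)‖ < r := by
      rw [Complex.norm_real, Real.norm_eq_abs, abs_of_pos (by linarith)]; linarith
    have hz2ne : ((r / 2 : ℝ) : ℂ) ≠ 0 := by
      simp only [ne_eq, Complex.ofReal_eq_zero]
      intro hc; linarith
    have slice : ∀ (w : Fin N → ℂ), (∀ i, ‖w i‖ < r) → ∀ k : ℕ,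
        Summable (fun β : Fin N → ℕ => (∏ i, w i ^ β i) • a (Fin.cons k β)) := by
      intro w hw k
      have hs := (key _ hz2 w hw).prod_factor k
      have := hs.const_smul ((((r / 2 : ℝ) : ℂ)) ^ k)⁻¹
      apply this.congr
      intro β
      rw [smul_smul, inv_mul_cancel₀ (pow_ne_zero k hz2ne), one_smul]
    have bzero : ∀ (w : Fin N → ℂ), (∀ i, ‖w i‖ < r) → ∀ k : ℕ,
        (∑' β : Fin N → ℕ, (∏ i, w i ^ β i) • a (Fin.cons k β)) = 0 := by
      intro w hw
      apply onevar_aux (fun k => ∑' β : Fin N → ℕ, (∏ i, w i ^ β i) • a (Fin.cons k β)) r hr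
      intro ζ hζ
      have hg := key ζ hζ w hw
      have hterm : ∀ k : ℕ,
          ζ ^ k • (∑' β : Fin N → ℕ, (∏ i, w i ^ β i) • a (Fin.cons k β))
            = ∑' β : Fin N → ℕ, ζ ^ k • ((∏ i, w i ^ β i) • a (Fin.cons k β)) := by
        intro k
        exact ((slice w hw k).tsum_const_smul (ζ ^ k)).symm
      haveI : FiniteDimensional ℝ E := FiniteDimensional.trans ℝ ℂ E
      have hnorm : Summable (fun q : ℕ × (Fin N → ℕ) =>
          ‖ζ ^ q.1 • ((∏ i, w i ^ q.2 i) • a (Fin.cons q.1 q.2))‖) := hg.norm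
      have hsum2 : Summable (fun k : ℕ =>
          ∑' β : Fin N → ℕ, ‖ζ ^ k • ((∏ i, w i ^ β i) • a (Fin.cons k β))‖) :=
        ((summable_prod_of_nonneg (fun _ => norm_nonneg _)).mp hnorm).2
      have hS : Summable (fun k : ℕ =>
          ζ ^ k • (∑' β : Fin N → ℕ, (∏ i, w i ^ β i) • a (Fin.cons k β))) := by
        rw [← summable_norm_iff]
        apply Summable.of_nonneg_of_le (fun _ => norm_nonneg _) _ hsum2
        intro k
        rw [hterm k]
        exact norm_tsum_le_tsum_norm (hg.prod_factor k).norm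
      refine ⟨hS, ?_⟩
      have hfull : (∑' q : ℕ × (Fin N → ℕ),
          ζ ^ q.1 • ((∏ i, w i ^ q.2 i) • a (Fin.cons q.1 q.2))) = 0 := by
        have hz : ∀ i, ‖(Fin.cons ζ w : Fin (N + 1) → ℂ) i‖ < r := by
          intro i
          rcases Fin.eq_zero_or_eq_succ i with rfl | ⟨j, rfl⟩
          · simpa using hζ
          · simpa using hw j
        have h2 := (h ((Fin.cons ζ w : Fin (N + 1) → ℂ)) hz).2
        rw [← (Fin.consEquiv (fun _ : Fin (N + 1) => ℕ)).tsum_eq] at h2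
        rw [← h2]
        apply tsum_congr
        intro q
        simp [Fin.consEquiv, Fin.prod_univ_succ, mul_smul]
      calc (∑' k, ζ ^ k • (∑' β : Fin N → ℕ, (∏ i, w i ^ β i) • a (Fin.cons k β)))
          = ∑' k, ∑' β : Fin N → ℕ, ζ ^ k • ((∏ i, w i ^ β i) • a (Fin.cons k β)) :=
            tsum_congr hterm
        _ = ∑' q : ℕ × (Fin N → ℕ),
              ζ ^ q.1 • ((∏ i, w i ^ q.2 i) • a (Fin.cons q.1 q.2)) := hg.tsum_prod.symm
        _ = 0 := hfull
    intro α
    have := IH (fun β => a (Fin.cons (α 0) β)) r hr (fun w hw =>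
      ⟨slice w hw (α 0), bzero w hw (α 0)⟩) (Fin.tail α)
    rwa [Fin.cons_self_tail] at this

end aux

/-- identity theorem for power series with coefficients in a
finite-dimensional commutative normed ℂ-algebra: if a power series in `N`
algebraic variables converges in a polydisk around the origin and its sum is
identically zero there, then all its coefficients vanish. -/
theorem stmt0 {A : Type*} [NormedCommRing A] [NormedAlgebra ℂ A]
    [FiniteDimensional ℂ A] (N : ℕ) (hN : 1 ≤ N)
    (c : (Fin N → ℕ) → A)
    (h : ∃ r > (0 : ℝ), ∀ Z : Fin N → A, (∀ i, ‖Z i‖ < r) →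
      Summable (fun α : Fin N → ℕ => c α * ∏ i, (Z i) ^ (α i)) ∧
      ∑' α : Fin N → ℕ, c α * ∏ i, (Z i) ^ (α i) = 0) :
    ∀ α : Fin N → ℕ, c α = 0 := by
  obtain ⟨r, hr, h⟩ := h
  set r' : ℝ := r / (‖(1 : A)‖ + 1) with hr'
  have hone : (0 : ℝ) < ‖(1 : A)‖ + 1 := by positivity
  have hr'pos : 0 < r' := div_pos hr hone
  apply multivar_aux N c r' hr'pos
  intro z hz
  set Z : Fin N → A := fun i => algebraMap ℂ A (z i) with hZ
  have hZnorm : ∀ i, ‖Z i‖ < r := by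
    intro i
    have heq : ‖Z i‖ = ‖z i‖ * ‖(1 : A)‖ := by
      simp only [hZ, Algebra.algebraMap_eq_smul_one, norm_smul]
    calc ‖Z i‖ ≤ ‖z i‖ * ‖(1 : A)‖ := le_of_eq heq
      _ ≤ ‖z i‖ * (‖(1 : A)‖ + 1) := by
          apply mul_le_mul_of_nonneg_left (by linarith) (norm_nonneg _)
      _ < r' * (‖(1 : A)‖ + 1) := by
          apply mul_lt_mul_of_pos_right (hz i) hone
      _ = r := by rw [hr']; field_simp
  have hco : ∀ α : Fin N → ℕ,
      (∏ i, z i ^ α i) • c α = c α * ∏ i, (Z i) ^ (α i) := by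
    intro α
    simp only [hZ, ← map_pow, ← map_prod]
    rw [Algebra.smul_def, mul_comm]
  have := h Z hZnorm
  constructor
  · exact this.1.congr (fun α => (hco α).symm)
  · rw [tsum_congr hco]; exact this.2
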